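/- Let α > 0, c > 0, and m ∈ [0, 1], and set A = √(c·(1 − m)/(1 + c·m)). Then (α·c/(π·(1 + c·m))) · ∫_ℝ (1/√(2π))·e^{−z²/2} · e^{−A²z²}/Q(A·z) dz ≥ α·c/(π·(1 + c)), where Q(t) = ∫_t^∞ (1/√(2π))·e^{−z²/2} dz is the standard Gaussian tail function. -/

import Mathlib

open Real MeasureTheory

noncomputable def gaussQ (t : ℝ) : ℝ :=
  ∫ z in Set.Ioi t, (1 / Real.sqrt (2 * Real.pi)) * Real.exp (-z ^ 2 / 2)

noncomputable def phi (z : ℝ) : ℝ := (1 / Real.sqrt (2 * Real.pi)) * Real.exp (-z ^ 2 / 2)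

lemma phi_pos (z : ℝ) : 0 < phi z := by
  unfold phi
  positivity

lemma phi_integrable : Integrable phi := by
  unfold phi
  apply Integrable.const_mul
  have := integrable_exp_neg_mul_sq (by norm_num : (0:ℝ) < 1/2)
  convert this using 2 with x
  ring_nf

lemma integral_phi : ∫ z, phi z = 1 := by
  unfold phi
  rw [MeasureTheory.integral_const_mul]
  have h : (fun z : ℝ => Real.exp (-z ^ 2 / 2)) = fun z => Real.exp (-(1/2) * z ^ 2) := by
    funext z; ring_nf
  rw [h, integral_gaussian]
  have hπ : (0:ℝ) < π := Real.pi_pos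
  rw [show π / (1/2 : ℝ) = 2 * π by ring]
  rw [one_div, inv_mul_cancel₀]
  positivity

lemma gaussQ_eq (t : ℝ) : gaussQ t = ∫ z in Set.Ioi t, phi z := rfl

lemma gaussQ_le_one (t : ℝ) : gaussQ t ≤ 1 := by
  rw [gaussQ_eq, ← integral_phi]
  exact setIntegral_le_integral phi_integrable (Filter.Eventually.of_forall fun z => (phi_pos z).le)

lemma gaussQ_lower (t : ℝ) : (1 / Real.sqrt (2*π)) * Real.exp (-(|t|+1)^2/2) ≤ gaussQ t := by
  have h1 : (1 / Real.sqrt (2*π)) * Real.exp (-(|t|+1)^2/2)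
      = ∫ _ in Set.Ioc t (t+1), (1 / Real.sqrt (2*π)) * Real.exp (-(|t|+1)^2/2) := by
    rw [setIntegral_const]
    simp [Real.volume_Ioc]
  rw [h1, gaussQ_eq]
  have h2 : ∫ z in Set.Ioc t (t+1), (1 / Real.sqrt (2*π)) * Real.exp (-(|t|+1)^2/2)
      ≤ ∫ z in Set.Ioc t (t+1), phi z := by
    apply setIntegral_mono_on
    · exact integrableOn_const measure_Ioc_lt_top.ne
    · exact phi_integrable.integrableOn
    · exact measurableSet_Ioc
    · intro z hz
      unfold phi
      have hz1 : |z| ≤ |t| + 1 := by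
        rcases hz with ⟨h3, h4⟩
        rw [abs_le]
        constructor
        · nlinarith [abs_nonneg t, neg_abs_le t, le_abs_self t]
        · nlinarith [le_abs_self t]
      have hsq : z ^ 2 ≤ (|t|+1) ^ 2 := by
        have := sq_abs z; nlinarith [abs_nonneg z]
      have : Real.exp (-(|t|+1)^2/2) ≤ Real.exp (-z^2/2) := by
        apply Real.exp_le_exp.2; linarith
      have h0 : (0:ℝ) ≤ 1 / Real.sqrt (2*π) := by positivity
      exact mul_le_mul_of_nonneg_left this h0
  refine h2.trans ?_
  apply setIntegral_mono_set phi_integrable.integrableOn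
    (Filter.Eventually.of_forall fun z => (phi_pos z).le)
  exact Filter.Eventually.of_forall (fun z hz => hz.1)

lemma gaussQ_pos (t : ℝ) : 0 < gaussQ t := by
  refine lt_of_lt_of_le ?_ (gaussQ_lower t)
  positivity

lemma gaussQ_antitone : Antitone gaussQ := by
  intro s t hst
  rw [gaussQ_eq, gaussQ_eq]
  apply setIntegral_mono_set phi_integrable.integrableOn
    (Filter.Eventually.of_forall fun z => (phi_pos z).le)
  exact Filter.Eventually.of_forall (fun z hz => lt_of_le_of_lt hst hz)

lemma gaussQ_measurable : Measurable gaussQ := gaussQ_antitone.measurable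

theorem stmt_9 (α c m : ℝ) (hα : 0 < α) (hc : 0 < c) (hm0 : 0 ≤ m) (hm1 : m ≤ 1) :
    let A : ℝ := Real.sqrt (c * (1 - m) / (1 + c * m))
    α * c / (Real.pi * (1 + c)) ≤
      (α * c / (Real.pi * (1 + c * m))) *
        ∫ z : ℝ, (1 / Real.sqrt (2 * Real.pi)) * Real.exp (-z ^ 2 / 2) *
          Real.exp (-A ^ 2 * z ^ 2) / gaussQ (A * z) := by
  intro A
  have hcm : (0:ℝ) < 1 + c * m := by nlinarith
  have hA0 : 0 ≤ A := Real.sqrt_nonneg _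
  have harg : (0:ℝ) ≤ c * (1 - m) / (1 + c * m) :=
    div_nonneg (mul_nonneg hc.le (by linarith)) hcm.le
  have hA2 : A ^ 2 = c * (1 - m) / (1 + c * m) := Real.sq_sqrt harg
  have hA2nn : 0 ≤ A ^ 2 := sq_nonneg A
  set f : ℝ → ℝ := fun z => (1 / Real.sqrt (2 * Real.pi)) * Real.exp (-z ^ 2 / 2) *
      Real.exp (-A ^ 2 * z ^ 2) / gaussQ (A * z) with hf
  set ℓ : ℝ → ℝ := fun z => (1 / Real.sqrt (2 * Real.pi)) *
      Real.exp (-(1/2 + A^2) * z ^ 2) with hℓ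
  -- lower bound function equals phi z * exp(-A² z²)
  have hℓ_eq : ∀ z, ℓ z = phi z * Real.exp (-A ^ 2 * z ^ 2) := by
    intro z
    simp only [hℓ, phi, mul_assoc, ← Real.exp_add]
    ring_nf
  have hℓ_int : Integrable ℓ := by
    apply Integrable.const_mul
    exact integrable_exp_neg_mul_sq (by positivity : (0:ℝ) < 1/2 + A^2)
  -- pointwise lower bound ℓ ≤ f
  have hle : ∀ z, ℓ z ≤ f z := by
    intro z
    rw [hℓ_eq]
    have hQp := gaussQ_pos (A * z)
    have hQ1 := gaussQ_le_one (A * z)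
    have hnum : 0 ≤ phi z * Real.exp (-A ^ 2 * z ^ 2) :=
      mul_nonneg (phi_pos z).le (Real.exp_nonneg _)
    have : phi z * Real.exp (-A ^ 2 * z ^ 2)
        ≤ phi z * Real.exp (-A ^ 2 * z ^ 2) / gaussQ (A * z) := by
      rw [le_div_iff₀ hQp]
      nlinarith
    simpa [hf, phi, mul_assoc] using this
  -- measurability of f
  have hmeas : AEStronglyMeasurable f volume := by
    apply Measurable.aestronglyMeasurable
    apply Measurable.div
    · fun_prop
    · exact gaussQ_measurable.comp (measurable_const_mul A)
  -- domination: f z ≤ e * exp(-z²/2)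
  have hbound : ∀ z : ℝ, f z ≤ Real.exp 1 * Real.exp (-z^2/2) := by
    intro z
    have hQp := gaussQ_pos (A * z)
    have hQl := gaussQ_lower (A * z)
    have hnum : (0:ℝ) ≤ (1 / Real.sqrt (2 * Real.pi)) * Real.exp (-z ^ 2 / 2) *
        Real.exp (-A ^ 2 * z ^ 2) := by positivity
    have hlowpos : (0:ℝ) < (1 / Real.sqrt (2*π)) * Real.exp (-(|A*z|+1)^2/2) := by positivity
    have h1 : f z ≤ ((1 / Real.sqrt (2 * Real.pi)) * Real.exp (-z ^ 2 / 2) *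
        Real.exp (-A ^ 2 * z ^ 2)) / ((1 / Real.sqrt (2*π)) * Real.exp (-(|A*z|+1)^2/2)) :=
      div_le_div_of_nonneg_left hnum hlowpos hQl
    refine h1.trans ?_
    rw [div_le_iff₀ hlowpos]
    have hsπ : (0:ℝ) < Real.sqrt (2*π) := Real.sqrt_pos.2 (by positivity)
    set w : ℝ := A * |z| with hw
    have hw0 : 0 ≤ w := mul_nonneg hA0 (abs_nonneg z)
    have habs : |A * z| = w := by rw [abs_mul, abs_of_nonneg hA0]
    have hwsq : w ^ 2 = A ^ 2 * z ^ 2 := by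
      rw [hw, mul_pow, sq_abs]
    rw [habs]
    have key : Real.exp (-z ^ 2 / 2) * Real.exp (-A ^ 2 * z ^ 2)
        ≤ Real.exp 1 * Real.exp (-z^2/2) * Real.exp (-(w+1)^2/2) := by
      rw [← Real.exp_add, ← Real.exp_add, ← Real.exp_add]
      apply Real.exp_le_exp.2
      nlinarith [sq_nonneg (w - 1)]
    calc (1 / Real.sqrt (2 * Real.pi)) * Real.exp (-z ^ 2 / 2) * Real.exp (-A ^ 2 * z ^ 2)
        = (1 / Real.sqrt (2*π)) * (Real.exp (-z ^ 2 / 2) * Real.exp (-A ^ 2 * z ^ 2)) := by ring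
      _ ≤ (1 / Real.sqrt (2*π)) * (Real.exp 1 * Real.exp (-z^2/2) * Real.exp (-(w+1)^2/2)) := by
          apply mul_le_mul_of_nonneg_left key (by positivity)
      _ = Real.exp 1 * Real.exp (-z^2/2) * ((1 / Real.sqrt (2*π)) * Real.exp (-(w+1)^2/2)) := by
          ring
  have hf_nonneg : ∀ z, 0 ≤ f z := fun z => (hℓ_eq z ▸
    (mul_nonneg (phi_pos z).le (Real.exp_nonneg _)) : (0:ℝ) ≤ ℓ z).trans (hle z)
  have hf_int : Integrable f := by
    apply Integrable.mono' ((integrable_exp_neg_mul_sq (by norm_num : (0:ℝ) < 1/2)).const_mul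
      (Real.exp 1)) hmeas
    refine Filter.Eventually.of_forall fun z => ?_
    rw [Real.norm_eq_abs, abs_of_nonneg (hf_nonneg z)]
    have := hbound z
    convert this using 2
    ring_nf
  -- integral of ℓ
  set B : ℝ := 1/2 + A^2 with hB
  have hBpos : (0:ℝ) < B := by positivity
  have hint_ℓ : ∫ z, ℓ z = (1 / Real.sqrt (2 * Real.pi)) * Real.sqrt (π / B) := by
    simp only [hℓ]
    rw [MeasureTheory.integral_const_mul, integral_gaussian]
  have hval : (1 / Real.sqrt (2 * Real.pi)) * Real.sqrt (π / B) = 1 / Real.sqrt (1 + 2 * A^2) := by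
    have hπ : (0:ℝ) < π := Real.pi_pos
    have h2B : (1:ℝ) + 2 * A^2 = 2 * B := by rw [hB]; ring
    rw [h2B]
    have hsp : (0:ℝ) < Real.sqrt (2*π) := Real.sqrt_pos.2 (by positivity)
    have hsB : (0:ℝ) < Real.sqrt (2*B) := Real.sqrt_pos.2 (by positivity)
    rw [show π / B = (2*π) / (2*B) by rw [mul_div_mul_left _ _ (two_ne_zero)],
      Real.sqrt_div (by positivity : (0:ℝ) ≤ 2*π)]
    field_simp
  -- 1/√(1+2A²) ≥ 1/(1+A²)
  have hstep : 1 / (1 + A^2) ≤ 1 / Real.sqrt (1 + 2 * A^2) := by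
    have h1 : Real.sqrt (1 + 2 * A^2) ≤ 1 + A^2 := by
      rw [show (1:ℝ) + A^2 = Real.sqrt ((1+A^2)^2) by
        rw [Real.sqrt_sq (by positivity)]]
      apply Real.sqrt_le_sqrt
      nlinarith [sq_nonneg (A^2)]
    have h2 : (0:ℝ) < Real.sqrt (1 + 2*A^2) := Real.sqrt_pos.2 (by positivity)
    exact one_div_le_one_div_of_le h2 h1
  have hI : 1 / (1 + A^2) ≤ ∫ z, f z := by
    calc 1 / (1 + A^2) ≤ 1 / Real.sqrt (1 + 2 * A^2) := hstep
      _ = ∫ z, ℓ z := by rw [hint_ℓ, hval]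
      _ ≤ ∫ z, f z := integral_mono hℓ_int hf_int hle
  -- final algebra
  have hc1 : (0:ℝ) < 1 + c := by linarith
  have hA2' : 1 + A^2 = (1 + c) / (1 + c * m) := by
    rw [hA2]; field_simp; ring
  have hK : (0:ℝ) < α * c / (Real.pi * (1 + c * m)) := by
    have := Real.pi_pos; positivity
  have h1A : 1 / (1 + A^2) = (1 + c * m) / (1 + c) := by
    rw [hA2']; rw [one_div_div]
  calc α * c / (Real.pi * (1 + c))
      = (α * c / (Real.pi * (1 + c * m))) * ((1 + c * m) / (1 + c)) := by
        field_simp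
    _ ≤ (α * c / (Real.pi * (1 + c * m))) * ∫ z, f z := by
        apply mul_le_mul_of_nonneg_left _ hK.le
        rw [← h1A]; exact hI
    _ = (α * c / (Real.pi * (1 + c * m))) * ∫ z : ℝ,
          (1 / Real.sqrt (2 * Real.pi)) * Real.exp (-z ^ 2 / 2) *
          Real.exp (-A ^ 2 * z ^ 2) / gaussQ (A * z) := rfl
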